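/- arXiv:2305.18071 — 3 statements merged into one kernel-verified Lean document; each statement's English description precedes it below -/
import Mathlib

section
/- For any finite sequence of opponent actions $a^{-i}_1,\dots,a^{-i}_T$ in an $N\times N$ bimatrix game with payoffs in $[0,1]$, the cumulative payoff of the best fixed action in hindsight, $\max_{a\in[N]}\sum_{t=1}^T G_i(a, a^{-i}_t)$, is at least the cumulative payoff of fictitious play with uniform tie-breaking, $\sum_{t=1}^T G_i(s^i_{fp,t}, a^{-i}_t)$. Equivalently, for any history $h$, the stochastic regret satisfies $R^{sto}_i(h) \le R^{ext}_i(h)$. -/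
open Finset

/-- Cumulative payoff of action `a` against the first `t` opponent actions. -/
noncomputable def cumPay {N : ℕ} (G : Fin N → Fin N → ℝ) (opp : ℕ → Fin N)
    (t : ℕ) (a : Fin N) : ℝ :=
  ∑ r ∈ Finset.range t, G a (opp r)

/-- The set of actions maximizing the cumulative payoff after `t` stages. -/
noncomputable def bestSet {N : ℕ} (G : Fin N → Fin N → ℝ) (opp : ℕ → Fin N)
    (t : ℕ) : Finset (Fin N) :=
  Finset.univ.filter (fun a => ∀ b : Fin N, cumPay G opp t b ≤ cumPay G opp t a)

/-- Fictitious play with uniform tie-breaking: the uniform distribution over the set of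
actions maximizing cumulative payoff against the first `t` opponent actions
(used as the strategy at stage `t+1`, i.e. given history of length `t`). -/
noncomputable def fp {N : ℕ} (G : Fin N → Fin N → ℝ) (opp : ℕ → Fin N)
    (t : ℕ) (a : Fin N) : ℝ :=
  if a ∈ bestSet G opp t then 1 / (bestSet G opp t).card else 0

/-- Expected payoff of a mixed strategy `s` against a pure opponent action `b`. -/
noncomputable def mixedPay {N : ℕ} (G : Fin N → Fin N → ℝ) (s : Fin N → ℝ)
    (b : Fin N) : ℝ :=
  ∑ a : Fin N, s a * G a b

lemma bestSet_nonempty {N : ℕ} (hN : 0 < N) (G : Fin N → Fin N → ℝ) (opp : ℕ → Fin N)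
    (t : ℕ) : (bestSet G opp t).Nonempty := by
  obtain ⟨a, -, ha⟩ := Finset.exists_max_image Finset.univ (cumPay G opp t)
    ⟨⟨0, hN⟩, Finset.mem_univ _⟩
  exact ⟨a, by simpa [bestSet] using fun b => ha b (Finset.mem_univ b)⟩

lemma fp_sum_one {N : ℕ} (hN : 0 < N) (G : Fin N → Fin N → ℝ) (opp : ℕ → Fin N) (t : ℕ) :
    ∑ a : Fin N, fp G opp t a = 1 := by
  have hne := bestSet_nonempty hN G opp t
  have hc : ((bestSet G opp t).card : ℝ) ≠ 0 := by
    exact_mod_cast Finset.card_ne_zero_of_mem hne.choose_spec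
  simp only [fp, Finset.sum_ite_mem, Finset.univ_inter, Finset.sum_const, nsmul_eq_mul]
  field_simp

lemma key_step {N : ℕ} (hN : 0 < N) (G : Fin N → Fin N → ℝ) (opp : ℕ → Fin N) (t : ℕ)
    (hne : (Finset.univ : Finset (Fin N)).Nonempty) :
    mixedPay G (fp G opp t) (opp t)
      ≤ Finset.univ.sup' hne (cumPay G opp (t + 1))
        - Finset.univ.sup' hne (cumPay G opp t) := by
  set M := Finset.univ.sup' hne (cumPay G opp t)
  set M' := Finset.univ.sup' hne (cumPay G opp (t + 1))
  have hbound : ∀ a : Fin N, fp G opp t a * G a (opp t) ≤ fp G opp t a * (M' - M) := by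
    intro a
    by_cases ha : a ∈ bestSet G opp t
    · have hmax : cumPay G opp t a = M := by
        refine le_antisymm (Finset.le_sup' _ (Finset.mem_univ a)) ?_
        refine Finset.sup'_le _ _ fun b _ => ?_
        simpa [bestSet] using (Finset.mem_filter.mp ha).2 b
      have h1 : cumPay G opp (t + 1) a = cumPay G opp t a + G a (opp t) := by
        simp [cumPay, Finset.sum_range_succ]
      have h2 : cumPay G opp (t + 1) a ≤ M' := Finset.le_sup' _ (Finset.mem_univ a)
      have hG : G a (opp t) ≤ M' - M := by
        rw [← hmax]; linarith
      have hfp : 0 ≤ fp G opp t a := by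
        simp only [fp, ha, if_true]; positivity
      exact mul_le_mul_of_nonneg_left hG hfp
    · simp [fp, ha]
  calc mixedPay G (fp G opp t) (opp t)
      ≤ ∑ a : Fin N, fp G opp t a * (M' - M) := Finset.sum_le_sum fun a _ => hbound a
    _ = (∑ a : Fin N, fp G opp t a) * (M' - M) := by rw [Finset.sum_mul]
    _ = M' - M := by rw [fp_sum_one hN G opp t, one_mul]

/-- the best fixed action in hindsight accumulates at least as much payoff
as fictitious play with uniform tie-breaking; equivalently, the stochastic regret is at
most the external regret. -/
theorem stochastic_regret_le_external_regret
    {N : ℕ} (hN : 0 < N) (G : Fin N → Fin N → ℝ)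
    (hG : ∀ a b : Fin N, G a b ∈ Set.Icc (0 : ℝ) 1)
    (opp act : ℕ → Fin N) (T : ℕ) :
    (∑ t ∈ Finset.range T, mixedPay G (fp G opp t) (opp t)
        ≤ ⨆ a : Fin N, ∑ t ∈ Finset.range T, G a (opp t)) ∧
    (∑ t ∈ Finset.range T,
        (mixedPay G (fp G opp t) (opp t) - G (act t) (opp t))
      ≤ ⨆ a : Fin N, ∑ t ∈ Finset.range T, (G a (opp t) - G (act t) (opp t))) := by
  have hne : (Finset.univ : Finset (Fin N)).Nonempty := ⟨⟨0, hN⟩, Finset.mem_univ _⟩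
  have htel : ∑ t ∈ Finset.range T, mixedPay G (fp G opp t) (opp t)
      ≤ Finset.univ.sup' hne (cumPay G opp T) := by
    have h0 : Finset.univ.sup' hne (cumPay G opp 0) = 0 := by
      have : cumPay G opp 0 = fun _ : Fin N => (0 : ℝ) := by
        funext a; simp [cumPay]
      rw [this, Finset.sup'_const]
    calc ∑ t ∈ Finset.range T, mixedPay G (fp G opp t) (opp t)
        ≤ ∑ t ∈ Finset.range T,
            (Finset.univ.sup' hne (cumPay G opp (t + 1))
              - Finset.univ.sup' hne (cumPay G opp t)) :=
          Finset.sum_le_sum fun t _ => key_step hN G opp t hne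
      _ = Finset.univ.sup' hne (cumPay G opp T)
            - Finset.univ.sup' hne (cumPay G opp 0) :=
          Finset.sum_range_sub (fun t => Finset.univ.sup' hne (cumPay G opp t)) T
      _ = Finset.univ.sup' hne (cumPay G opp T) := by rw [h0, sub_zero]
  obtain ⟨a0, -, ha0⟩ := Finset.exists_mem_eq_sup' hne (cumPay G opp T)
  have hle0 : ∑ t ∈ Finset.range T, mixedPay G (fp G opp t) (opp t)
      ≤ ∑ t ∈ Finset.range T, G a0 (opp t) := by
    have : Finset.univ.sup' hne (cumPay G opp T) = ∑ t ∈ Finset.range T, G a0 (opp t) := by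
      rw [ha0]; rfl
    linarith [htel, this.le]
  haveI : Nonempty (Fin N) := ⟨⟨0, hN⟩⟩
  constructor
  · exact hle0.trans (le_ciSup
      (f := fun a : Fin N => ∑ t ∈ Finset.range T, G a (opp t))
      (Set.Finite.bddAbove (Set.finite_range _)) a0)
  · have hbdd : BddAbove (Set.range fun a : Fin N =>
        ∑ t ∈ Finset.range T, (G a (opp t) - G (act t) (opp t))) :=
      Set.Finite.bddAbove (Set.finite_range _)
    have h2 := le_ciSup hbdd a0
    rw [Finset.sum_sub_distrib] at h2 ⊢
    linarith
end

section
/- The multiplicative weights (exponential weights) algorithm with learning rate $\eta = \sqrt{8\ln N / T}$, which maintains weights $w_{k,t+1} = w_{k,t}\exp(\eta\, G_i(k, a^{-i}_t))$ starting from uniform weights and plays the normalized weight distribution, guarantees that for any sequence of opponent actions over $T$ stages, the expected external regret satisfies $\bar R^{ext}_i(h_T) = \max_{k\in[N]}\sum_{t=1}^T [G_i(k, a^{-i}_t) - G_i(s^i_{mw,t}, a^{-i}_t)] \le \sqrt{(T/2)\ln N}$. -/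
open Finset

/-- Multiplicative (exponential) weights: weight of action `k` at stage `t`,
starting from uniform weights and multiplying by `exp (η · G k (opp t))`. -/
noncomputable def mwWeight {N : ℕ} (G : Fin N → Fin N → ℝ) (opp : ℕ → Fin N)
    (η : ℝ) : ℕ → Fin N → ℝ
  | 0, _ => 1
  | t + 1, k => mwWeight G opp η t k * Real.exp (η * G k (opp t))

/-- The multiplicative-weights mixed strategy at stage `t`: normalized weights. -/
noncomputable def mwStrat {N : ℕ} (G : Fin N → Fin N → ℝ) (opp : ℕ → Fin N)
    (η : ℝ) (t : ℕ) (k : Fin N) : ℝ :=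
  mwWeight G opp η t k / ∑ j : Fin N, mwWeight G opp η t j

private lemma mwD_pos (μ : ℝ) (h0 : 0 ≤ μ) (h1 : μ ≤ 1) (x : ℝ) :
    0 < 1 - μ + μ * Real.exp x := by
  rcases le_total 1 (Real.exp x) with h | h
  · nlinarith [Real.exp_pos x]
  · nlinarith [Real.exp_pos x]

/-- Hoeffding's lemma, Bernoulli case. -/
private lemma hoeff_bernoulli (μ : ℝ) (h0 : 0 ≤ μ) (h1 : μ ≤ 1) (s : ℝ) (hs : 0 ≤ s) :
    Real.log (1 - μ + μ * Real.exp s) ≤ s * μ + s ^ 2 / 8 := by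
  set D : ℝ → ℝ := fun x => 1 - μ + μ * Real.exp x with hDdef
  have hDpos : ∀ x, 0 < D x := mwD_pos μ h0 h1
  have hD : ∀ x, HasDerivAt D (μ * Real.exp x) x := by
    intro x
    exact ((Real.hasDerivAt_exp x).const_mul μ).const_add (1 - μ)
  set h : ℝ → ℝ := fun x => μ + x / 4 - μ * Real.exp x / D x with hhdef
  have hh : ∀ x, HasDerivAt h
      (1 / 4 - (μ * Real.exp x * D x - μ * Real.exp x * (μ * Real.exp x)) / D x ^ 2) x := by
    intro x
    have h1' : HasDerivAt (fun x => μ + x / 4) (1 / 4) x := by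
      simpa using ((hasDerivAt_id x).div_const 4).const_add μ
    have h2' : HasDerivAt (fun x => μ * Real.exp x / D x)
        ((μ * Real.exp x * D x - μ * Real.exp x * (μ * Real.exp x)) / D x ^ 2) x :=
      ((Real.hasDerivAt_exp x).const_mul μ).div (hD x) (hDpos x).ne'
    exact h1'.sub h2'
  have hh_deriv_nonneg : ∀ x, 0 ≤ 1 / 4 -
      (μ * Real.exp x * D x - μ * Real.exp x * (μ * Real.exp x)) / D x ^ 2 := by
    intro x
    have hDx := hDpos x
    have hD2 : (0:ℝ) < D x ^ 2 := by positivity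
    rw [sub_nonneg, div_le_iff₀ hD2]
    have hsq := sq_nonneg ((1 - μ) - μ * Real.exp x)
    nlinarith [Real.exp_pos x]
  have hmono : Monotone h := by
    have hdiff : Differentiable ℝ h := fun x => (hh x).differentiableAt
    apply monotone_of_deriv_nonneg hdiff
    intro x
    rw [(hh x).deriv]
    exact hh_deriv_nonneg x
  have hh0 : h 0 = 0 := by
    simp [hhdef, hDdef]
  have hhnonneg : ∀ x, 0 ≤ x → 0 ≤ h x := by
    intro x hx
    calc (0:ℝ) = h 0 := hh0.symm
    _ ≤ h x := hmono hx
  -- now f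
  set f : ℝ → ℝ := fun x => x * μ + x ^ 2 / 8 - Real.log (D x) with hfdef
  have hf : ∀ x, HasDerivAt f (h x) x := by
    intro x
    have h1' : HasDerivAt (fun x : ℝ => x * μ + x ^ 2 / 8) (μ + x / 4) x := by
      have := ((hasDerivAt_id x).mul_const μ).add ((hasDerivAt_pow 2 x).div_const 8)
      refine this.congr_deriv ?_
      ring
    have h2' : HasDerivAt (fun x => Real.log (D x)) (μ * Real.exp x / D x) x :=
      (hD x).log (hDpos x).ne'
    exact h1'.sub h2'
  have hf0 : f 0 = 0 := by simp [hfdef, hDdef]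
  have hfdiff : Differentiable ℝ f := fun x => (hf x).differentiableAt
  have hmonof : MonotoneOn f (Set.Ici 0) := by
    apply monotoneOn_of_deriv_nonneg (convex_Ici 0) hfdiff.continuous.continuousOn
      (fun x _ => (hfdiff x).differentiableWithinAt)
    intro x hx
    rw [(hf x).deriv]
    exact hhnonneg x (le_of_lt (by simpa using hx))
  have hkey : 0 ≤ f s := hf0 ▸ hmonof Set.self_mem_Ici hs hs
  simp only [hfdef, hDdef] at hkey
  linarith


private lemma exp_interp (x s : ℝ) (h0 : 0 ≤ x) (h1 : x ≤ 1) :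
    Real.exp (s * x) ≤ 1 - x + x * Real.exp s := by
  have := convexOn_exp.2 (Set.mem_univ (0:ℝ)) (Set.mem_univ s)
    (by linarith : (0:ℝ) ≤ 1 - x) h0 (by ring)
  simp only [smul_eq_mul, mul_zero, zero_add, Real.exp_zero, mul_one] at this
  calc Real.exp (s * x) = Real.exp ((1 - x) * 0 + x * s) := by ring_nf
  _ ≤ (1 - x) * 1 + x * Real.exp s := by
      simpa using convexOn_exp.2 (Set.mem_univ (0:ℝ)) (Set.mem_univ s)
        (by linarith : (0:ℝ) ≤ 1 - x) h0 (by ring)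
  _ = 1 - x + x * Real.exp s := by ring

/-- multiplicative weights with learning rate `η = √(8 ln N / T)`
guarantees expected external regret at most `√((T/2) ln N)` against any sequence of
opponent actions. -/
theorem mw_regret_bound
    {N : ℕ} (hN : 0 < N) (G : Fin N → Fin N → ℝ)
    (hG : ∀ a b : Fin N, G a b ∈ Set.Icc (0 : ℝ) 1)
    (opp : ℕ → Fin N) (T : ℕ) (hT : 0 < T)
    (η : ℝ) (hη : η = Real.sqrt (8 * Real.log N / T)) :
    (⨆ k : Fin N, ∑ t ∈ Finset.range T,
        (G k (opp t) - mixedPay G (mwStrat G opp η t) (opp t)))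
      ≤ Real.sqrt ((T / 2) * Real.log N) := by
  have : Nonempty (Fin N) := Fin.pos_iff_nonempty.mp hN
  set w : ℕ → Fin N → ℝ := mwWeight G opp η with hw
  set W : ℕ → ℝ := fun t => ∑ j : Fin N, w t j with hW
  have hw_pos : ∀ t k, 0 < w t k := by
    intro t
    induction t with
    | zero => intro k; simp [hw, mwWeight]
    | succ t ih => intro k; exact mul_pos (ih k) (Real.exp_pos _)
  have hW_pos : ∀ t, 0 < W t :=
    fun t => Finset.sum_pos (fun k _ => hw_pos t k) univ_nonempty
  set μ : ℕ → ℝ := fun t => mixedPay G (mwStrat G opp η t) (opp t) with hμdef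
  have hμ0 : ∀ t, 0 ≤ μ t := by
    intro t
    apply Finset.sum_nonneg
    intro k _
    exact mul_nonneg (div_nonneg (hw_pos t k).le (hW_pos t).le) (hG k (opp t)).1
  have hμ1 : ∀ t, μ t ≤ 1 := by
    intro t
    calc μ t ≤ ∑ k : Fin N, w t k / W t * 1 := by
          apply Finset.sum_le_sum
          intro k _
          exact mul_le_mul_of_nonneg_left (hG k (opp t)).2
            (div_nonneg (hw_pos t k).le (hW_pos t).le)
    _ = 1 := by
          simp only [mul_one]
          rw [← Finset.sum_div, div_self (hW_pos t).ne']
  have hsumwG : ∀ t, ∑ k : Fin N, w t k * G k (opp t) = W t * μ t := by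
    intro t
    simp only [hμdef, mixedPay, mwStrat, ← hw]
    have hWt : ∑ j : Fin N, w t j = W t := rfl
    rw [Finset.mul_sum]
    apply Finset.sum_congr rfl
    intro k _
    rw [hWt, div_mul_eq_mul_div, ← mul_div_assoc, mul_comm (W t),
      mul_div_assoc, div_self (hW_pos t).ne', mul_one]
  have hη0 : 0 ≤ η := hη ▸ Real.sqrt_nonneg _
  -- one-step bound
  have hstep : ∀ t, Real.log (W (t + 1)) ≤ Real.log (W t) + (η * μ t + η ^ 2 / 8) := by
    intro t
    have hWt1 : W (t + 1) ≤ W t * (1 - μ t + μ t * Real.exp η) := by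
      calc W (t + 1) = ∑ k : Fin N, w t k * Real.exp (η * G k (opp t)) := rfl
      _ ≤ ∑ k : Fin N, w t k * (1 - G k (opp t) + G k (opp t) * Real.exp η) := by
          apply Finset.sum_le_sum
          intro k _
          exact mul_le_mul_of_nonneg_left
            (exp_interp _ _ (hG k (opp t)).1 (hG k (opp t)).2) (hw_pos t k).le
      _ = W t * (1 - μ t + μ t * Real.exp η) := by
          have h1 := hsumwG t
          have h2 : ∑ k : Fin N, w t k * (G k (opp t) * Real.exp η)
              = (∑ k : Fin N, w t k * G k (opp t)) * Real.exp η := by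
            rw [Finset.sum_mul]; exact Finset.sum_congr rfl fun k _ => by ring
          have h3 : ∑ k : Fin N, w t k = W t := rfl
          simp only [mul_sub, mul_one, mul_add, Finset.sum_add_distrib,
            Finset.sum_sub_distrib, h2, h1, h3]
          ring
    have hD_pos : (0:ℝ) < 1 - μ t + μ t * Real.exp η := mwD_pos _ (hμ0 t) (hμ1 t) η
    calc Real.log (W (t + 1)) ≤ Real.log (W t * (1 - μ t + μ t * Real.exp η)) :=
          Real.log_le_log (hW_pos (t + 1)) hWt1
    _ = Real.log (W t) + Real.log (1 - μ t + μ t * Real.exp η) :=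
          Real.log_mul (hW_pos t).ne' hD_pos.ne'
    _ ≤ Real.log (W t) + (η * μ t + η ^ 2 / 8) := by
          have := hoeff_bernoulli (μ t) (hμ0 t) (hμ1 t) η hη0
          linarith
  -- telescoped bound
  have htel : ∀ n : ℕ, Real.log (W n) ≤
      Real.log N + η * (∑ t ∈ Finset.range n, μ t) + n * η ^ 2 / 8 := by
    intro n
    induction n with
    | zero => simp [hW, hw, mwWeight]
    | succ n ih =>
        have := hstep n
        rw [Finset.sum_range_succ]
        push_cast
        linarith
  -- lower bound: weights are exponentials of cumulative gains
  have hwexp : ∀ n k, w n k = Real.exp (η * ∑ t ∈ Finset.range n, G k (opp t)) := by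
    intro n
    induction n with
    | zero => intro k; simp [hw, mwWeight]
    | succ n ih =>
        intro k
        show w n k * Real.exp (η * G k (opp n)) = _
        rw [ih k, ← Real.exp_add, Finset.sum_range_succ]
        ring_nf
  have hlower : ∀ k : Fin N, η * ∑ t ∈ Finset.range T, G k (opp t) ≤ Real.log (W T) := by
    intro k
    have h1 : w T k ≤ W T :=
      Finset.single_le_sum (fun j _ => (hw_pos T j).le) (Finset.mem_univ k)
    calc η * ∑ t ∈ Finset.range T, G k (opp t)
        = Real.log (w T k) := by rw [hwexp T k, Real.log_exp]
    _ ≤ Real.log (W T) := Real.log_le_log (hw_pos T k) h1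
  -- combine
  apply ciSup_le
  intro k
  rw [Finset.sum_sub_distrib]
  rcases eq_or_lt_of_le (Nat.one_le_iff_ne_zero.mpr hN.ne') with h1 | h2
  · -- N = 1
    have hN1 : N = 1 := h1.symm
    subst hN1
    have : ∀ t, μ t = G k (opp t) := by
      intro t
      simp only [hμdef, mixedPay, mwStrat]
      rw [Fin.sum_univ_one, Fin.sum_univ_one]
      rw [div_self (hw_pos t 0).ne', one_mul]
      congr 1 <;> exact (Subsingleton.elim _ _)
    rw [show (∑ t ∈ Finset.range T, μ t) = ∑ t ∈ Finset.range T, G k (opp t) from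
      Finset.sum_congr rfl fun t _ => this t]
    simp [Real.sqrt_nonneg]
  · -- N ≥ 2
    set L : ℝ := Real.log N with hL
    have hL_pos : 0 < L := Real.log_pos (by exact_mod_cast h2)
    have hT' : (0:ℝ) < T := by exact_mod_cast hT
    have hηpos : 0 < η := by
      rw [hη]
      apply Real.sqrt_pos.mpr
      positivity
    have hη2 : η ^ 2 = 8 * L / T := by
      rw [hη, Real.sq_sqrt (by positivity)]
    set r : ℝ := Real.sqrt ((T / 2) * L) with hr
    have hηr : η * r = 2 * L := by
      rw [hη, hr, ← Real.sqrt_mul (by positivity)]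
      rw [show 8 * L / T * (T / 2 * L) = (2 * L) ^ 2 by field_simp; ring]
      exact Real.sqrt_sq (by positivity)
    have hLη : L / η = r / 2 := by
      field_simp
      linarith
    have hTη : T * η / 8 = r / 2 := by
      rw [div_eq_div_iff (by norm_num) (by norm_num)]
      have : T * η ^ 2 = 8 * L := by rw [hη2]; field_simp
      nlinarith
    have hmain : η * (∑ t ∈ Finset.range T, G k (opp t)) - η * (∑ t ∈ Finset.range T, μ t)
        ≤ L + T * η ^ 2 / 8 := by
      have := htel T
      have := hlower k
      linarith
    have : ∑ t ∈ Finset.range T, G k (opp t) - ∑ t ∈ Finset.range T, μ t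
        ≤ L / η + T * η / 8 := by
      rw [div_add_div _ _ hηpos.ne' (by norm_num : (8:ℝ) ≠ 0)]
      rw [le_div_iff₀ (by positivity)]
      ring_nf
      ring_nf at hmain
      nlinarith
    calc ∑ t ∈ Finset.range T, G k (opp t) - ∑ t ∈ Finset.range T, μ t
        ≤ L / η + T * η / 8 := this
    _ = r := by rw [hLη, hTη]; ring
end

section
/- Let $\epsilon_0 \ge 2\sqrt{(2/T)\ln(4/\delta)}$ and $\epsilon = \epsilon_0 + 1/T$. The stochastic fallback agent (play PONE component $s_i$ while $R^{sto}_i(h_{t-1}) < \epsilon T - 1$, else switch permanently to fictitious play) is $(\delta,\epsilon,T)$-stochastically consistent against every opponent: with probability 1, $\frac{1}{T} R^{sto}_i(h_T) \le \epsilon$. -/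
open Finset

/-- Stochastic regret after `t` stages of an agent playing mixed strategies `strat`,
relative to fictitious play, against realized opponent actions `opp`. -/
noncomputable def stochRegret {N : ℕ} (G : Fin N → Fin N → ℝ)
    (strat : ℕ → Fin N → ℝ) (opp : ℕ → Fin N) (t : ℕ) : ℝ :=
  ∑ r ∈ Finset.range t, (mixedPay G (fp G opp r) (opp r) - mixedPay G (strat r) (opp r))

/-- the stochastic fallback agent — play the PONE component `si` while
its accumulated stochastic regret is below `ε T - 1`, and otherwise switch (permanently)
to fictitious play — is `(δ, ε, T)`-stochastically consistent against every opponent: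
surely its average stochastic regret after `T` stages is at most `ε = ε₀ + 1/T`. -/
theorem stochastic_fallback_consistent
    {N : ℕ} (hN : 0 < N) (G : Fin N → Fin N → ℝ)
    (hG : ∀ a b : Fin N, G a b ∈ Set.Icc (0 : ℝ) 1)
    (T : ℕ) (hT : 0 < T) {δ : ℝ} (hδ : δ ∈ Set.Ioo (0 : ℝ) 1)
    (ε₀ ε : ℝ) (hε₀ : 2 * Real.sqrt ((2 / T) * Real.log (4 / δ)) ≤ ε₀)
    (hε : ε = ε₀ + 1 / T)
    (si : Fin N → ℝ) (hsi : (∀ a, 0 ≤ si a) ∧ ∑ a : Fin N, si a = 1)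
    (opp : ℕ → Fin N) (strat : ℕ → Fin N → ℝ)
    (hstrat : ∀ t, (∀ a, 0 ≤ strat t a) ∧ ∑ a : Fin N, strat t a = 1)
    (hplay : ∀ t : ℕ, stochRegret G strat opp t < ε * T - 1 → strat t = si)
    (hfallback : ∀ t : ℕ, ε * T - 1 ≤ stochRegret G strat opp t → strat t = fp G opp t) :
    stochRegret G strat opp T / T ≤ ε := by
  have hTpos : (0 : ℝ) < T := by exact_mod_cast hT
  -- bounds on mixedPay for a probability vector
  have hmix : ∀ (s : Fin N → ℝ), (∀ a, 0 ≤ s a) → (∑ a : Fin N, s a = 1) →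
      ∀ b, mixedPay G s b ∈ Set.Icc (0 : ℝ) 1 := by
    intro s hs hs1 b
    constructor
    · exact Finset.sum_nonneg fun a _ => mul_nonneg (hs a) (hG a b).1
    · calc mixedPay G s b ≤ ∑ a : Fin N, s a * 1 :=
            Finset.sum_le_sum fun a _ => mul_le_mul_of_nonneg_left (hG a b).2 (hs a)
        _ = 1 := by simp [hs1]
  -- bestSet is nonempty
  have hbest : ∀ t, (bestSet G opp t).Nonempty := by
    intro t
    obtain ⟨a, -, ha⟩ := Finset.exists_max_image (Finset.univ : Finset (Fin N))
      (cumPay G opp t) (Finset.univ_nonempty_iff.2 (Fin.pos_iff_nonempty.1 hN))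
    exact ⟨a, by simp [bestSet]; intro b; exact ha b (Finset.mem_univ b)⟩
  -- fp is a probability vector
  have hfp : ∀ t, (∀ a, 0 ≤ fp G opp t a) ∧ ∑ a : Fin N, fp G opp t a = 1 := by
    intro t
    constructor
    · intro a
      unfold fp
      split <;> positivity
    · have hcard : (0 : ℝ) < (bestSet G opp t).card := by
        exact_mod_cast Finset.card_pos.2 (hbest t)
      unfold fp
      rw [Finset.sum_ite_mem, Finset.univ_inter, Finset.sum_const, nsmul_eq_mul]
      field_simp
  -- each increment is in [0? no: ≤ 1 and fp step gives 0]
  have hstep : ∀ t, stochRegret G strat opp (t + 1) =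
      stochRegret G strat opp t +
        (mixedPay G (fp G opp t) (opp t) - mixedPay G (strat t) (opp t)) := by
    intro t; exact Finset.sum_range_succ _ t
  have hεT : (1 : ℝ) ≤ ε * T := by
    have h0 : 0 ≤ ε₀ := le_trans (by positivity) hε₀
    have : (1 : ℝ) / T * T = 1 := by field_simp
    nlinarith
  -- main invariant
  have key : ∀ t, stochRegret G strat opp t ≤ ε * T := by
    intro t
    induction t with
    | zero => simp [stochRegret]; linarith
    | succ t ih =>
      rw [hstep t]
      by_cases h : stochRegret G strat opp t < ε * T - 1
      · have h1 := (hmix (fp G opp t) (hfp t).1 (hfp t).2 (opp t)).2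
        have h2 := (hmix (strat t) (hstrat t).1 (hstrat t).2 (opp t)).1
        linarith
      · push_neg at h
        rw [hfallback t h]
        simpa using ih
  rw [div_le_iff₀ hTpos]
  exact key T
end
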